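/- Let L_{l⁺om} be the family of all finite unions of open intervals of ℝ that are bounded from above (including the empty union), so that (ℝ, L_{l⁺om}) is a locally small space whose weakly open sets form the natural topology on ℝ. Then: (1) arctan : ℝ → ℝ is bounded and continuous as a map (ℝ, L_{l⁺om}) → (ℝ, L_{l⁺om}); (2) x ↦ −x is continuous but not bounded as a map (ℝ, L_{l⁺om}) → (ℝ, L_{l⁺om}); (3) sin : ℝ → ℝ is bounded but not continuous as a map (ℝ, L_{l⁺om}) → (ℝ, L_{l⁺om}); (4) x ↦ exp(−x) is continuous but not bounded as a map (ℝ, L_{l⁺om}) → (ℝ, L_{l⁺om}). -/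

import Mathlib

open Set TopologicalSpace

universe u

/-- The weakly open sets generated by a family: unions of subfamilies. -/
def woF {X : Type u} (Lx : Set (Set X)) : Set (Set X) := {U | ∃ F ⊆ Lx, U = ⋃₀ F}

/-- `f` is a bounded map with respect to the given smopologies. -/
def IsBdd {X Y : Type*} (LX : Set (Set X)) (LY : Set (Set Y)) (f : X → Y) : Prop :=
  ∀ W ∈ LX, ∃ V ∈ LY, W ⊆ f ⁻¹' V

/-- `f` is a continuous map of locally small spaces. -/
def IsCt {X Y : Type*} (LX : Set (Set X)) (LY : Set (Set Y)) (f : X → Y) : Prop :=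
  ∀ V ∈ LY, ∀ W ∈ LX, f ⁻¹' V ∩ W ∈ LX

/-- The smopology of finite unions of open intervals of `ℝ` that are bounded
from above (the lower endpoint may be `-∞`). -/
def Llom : Set (Set ℝ) :=
  {U | ∃ F : Finset (EReal × ℝ),
    U = ⋃ p ∈ F, {x : ℝ | p.1 < (x : EReal) ∧ x < p.2}}

section Helpers

open Real

lemma Ipq_open (p : EReal × ℝ) : IsOpen {x : ℝ | p.1 < (x : EReal) ∧ x < p.2} := by
  have : {x : ℝ | p.1 < (x : EReal) ∧ x < p.2}
      = ((↑) : ℝ → EReal) ⁻¹' (Ioi p.1) ∩ Iio p.2 := rfl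
  rw [this]
  exact (isOpen_Ioi.preimage continuous_coe_real_ereal).inter isOpen_Iio

lemma Ipq_ordConn (p : EReal × ℝ) : OrdConnected {x : ℝ | p.1 < (x : EReal) ∧ x < p.2} := by
  constructor
  intro x hx y hy z hz
  exact ⟨lt_of_lt_of_le hx.1 (EReal.coe_le_coe_iff.2 hz.1), lt_of_le_of_lt hz.2 hy.2⟩

lemma Ipq_bdd (p : EReal × ℝ) : BddAbove {x : ℝ | p.1 < (x : EReal) ∧ x < p.2} :=
  ⟨p.2, fun _ hx => hx.2.le⟩

lemma Llom_empty : (∅ : Set ℝ) ∈ Llom := ⟨∅, by simp⟩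

lemma Llom_union {A B : Set ℝ} (hA : A ∈ Llom) (hB : B ∈ Llom) : A ∪ B ∈ Llom := by
  obtain ⟨F, rfl⟩ := hA; obtain ⟨G, rfl⟩ := hB
  exact ⟨F ∪ G, by rw [Finset.set_biUnion_union]⟩

lemma Llom_biUnion {ι : Type*} (s : Finset ι) (f : ι → Set ℝ)
    (h : ∀ i ∈ s, f i ∈ Llom) : (⋃ i ∈ s, f i) ∈ Llom := by
  classical
  induction s using Finset.induction with
  | empty => simpa using Llom_empty
  | insert _ _ hx ih =>
    rw [Finset.set_biUnion_insert]
    exact Llom_union (h _ (Finset.mem_insert_self _ _))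
      (ih fun i hi => h i (Finset.mem_insert_of_mem hi))

lemma mem_Llom_of {S : Set ℝ} (ho : IsOpen S) (hc : S.OrdConnected) (hb : BddAbove S) :
    S ∈ Llom := by
  rcases S.eq_empty_or_nonempty with rfl | hne
  · exact Llom_empty
  have hbS : sSup S ∉ S := by
    intro h
    rcases Metric.isOpen_iff.1 ho _ h with ⟨ε, hε, hball⟩
    have h2 : sSup S + ε / 2 ∈ S := by
      apply hball
      simp only [Metric.mem_ball, Real.dist_eq]
      rw [abs_of_pos (by linarith)]
      linarith
    have := le_csSup hb h2
    linarith
  by_cases hbb : BddBelow S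
  · have haS : sInf S ∉ S := by
      intro h
      rcases Metric.isOpen_iff.1 ho _ h with ⟨ε, hε, hball⟩
      have h2 : sInf S - ε / 2 ∈ S := by
        apply hball
        simp only [Metric.mem_ball, Real.dist_eq]
        rw [abs_of_neg (by linarith)]
        linarith
      have := csInf_le hbb h2
      linarith
    refine ⟨{(((sInf S : ℝ) : EReal), sSup S)}, ?_⟩
    rw [Finset.set_biUnion_singleton]
    ext x
    simp only [mem_setOf_eq, EReal.coe_lt_coe_iff]
    constructor
    · intro hx
      refine ⟨(csInf_le hbb hx).lt_of_ne' ?_, (le_csSup hb hx).lt_of_ne ?_⟩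
      · rintro h; exact haS (h ▸ hx)
      · rintro h; exact hbS (h ▸ hx)
    · rintro ⟨h1, h2⟩
      obtain ⟨s, hs, hsx⟩ := exists_lt_of_csInf_lt hne h1
      obtain ⟨t, ht, hxt⟩ := exists_lt_of_lt_csSup hne h2
      exact hc.out hs ht ⟨hsx.le, hxt.le⟩
  · refine ⟨{((⊥ : EReal), sSup S)}, ?_⟩
    rw [Finset.set_biUnion_singleton]
    ext x
    simp only [mem_setOf_eq, EReal.bot_lt_coe, true_and]
    constructor
    · intro hx
      refine (le_csSup hb hx).lt_of_ne ?_
      rintro h; exact hbS (h ▸ hx)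
    · intro h2
      obtain ⟨s, hs, hsx⟩ := not_bddBelow_iff.1 hbb x
      obtain ⟨t, ht, hxt⟩ := exists_lt_of_lt_csSup hne h2
      exact hc.out hs ht ⟨hsx.le, hxt.le⟩

lemma Llom_inter {A B : Set ℝ} (hA : A ∈ Llom) (hB : B ∈ Llom) : A ∩ B ∈ Llom := by
  obtain ⟨F, rfl⟩ := hA; obtain ⟨G, rfl⟩ := hB
  have : (⋃ p ∈ F, {x : ℝ | p.1 < (x : EReal) ∧ x < p.2}) ∩
      (⋃ q ∈ G, {x : ℝ | q.1 < (x : EReal) ∧ x < q.2}) =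
      ⋃ p ∈ F, ⋃ q ∈ G, ({x : ℝ | p.1 < (x : EReal) ∧ x < p.2} ∩
        {x : ℝ | q.1 < (x : EReal) ∧ x < q.2}) := by
    ext x; simp only [mem_inter_iff, mem_iUnion, mem_setOf_eq, exists_prop]; tauto
  rw [this]
  refine Llom_biUnion _ _ fun p _ => Llom_biUnion _ _ fun q _ => ?_
  exact mem_Llom_of ((Ipq_open p).inter (Ipq_open q)) ((Ipq_ordConn p).inter (Ipq_ordConn q))
    ((Ipq_bdd p).mono inter_subset_left)

lemma Llom_isOpen {S : Set ℝ} (hS : S ∈ Llom) : IsOpen S := by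
  obtain ⟨F, rfl⟩ := hS
  exact isOpen_biUnion fun p _ => Ipq_open p

lemma Llom_bddAbove {S : Set ℝ} (hS : S ∈ Llom) : BddAbove S := by
  obtain ⟨F, rfl⟩ := hS
  rw [← Finset.set_biUnion_coe]
  exact (Set.Finite.bddAbove_biUnion F.finite_toSet).2 fun p _ => Ipq_bdd p

lemma Ioo_mem_Llom (a b : ℝ) : Ioo a b ∈ Llom := by
  refine ⟨{((a : EReal), b)}, ?_⟩
  rw [Finset.set_biUnion_singleton]
  ext x
  simp [EReal.coe_lt_coe_iff]

lemma Iio_mem_Llom (b : ℝ) : Iio b ∈ Llom := by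
  refine ⟨{((⊥ : EReal), b)}, ?_⟩
  rw [Finset.set_biUnion_singleton]
  ext x
  simp [EReal.bot_lt_coe]

lemma isCt_of_mono {f : ℝ → ℝ} (hf : Continuous f) (hm : Monotone f ∨ Antitone f) :
    IsCt Llom Llom f := by
  rintro V ⟨F, rfl⟩ W ⟨G, rfl⟩
  have : f ⁻¹' (⋃ p ∈ F, {x : ℝ | p.1 < (x : EReal) ∧ x < p.2}) ∩
      (⋃ q ∈ G, {x : ℝ | q.1 < (x : EReal) ∧ x < q.2}) =
      ⋃ p ∈ F, ⋃ q ∈ G, (f ⁻¹' {x : ℝ | p.1 < (x : EReal) ∧ x < p.2} ∩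
        {x : ℝ | q.1 < (x : EReal) ∧ x < q.2}) := by
    ext x
    simp only [mem_inter_iff, mem_iUnion, mem_preimage, mem_setOf_eq, exists_prop]
    tauto
  rw [this]
  refine Llom_biUnion _ _ fun p _ => Llom_biUnion _ _ fun q _ => ?_
  refine mem_Llom_of (((Ipq_open p).preimage hf).inter (Ipq_open q)) ?_
    ((Ipq_bdd q).mono inter_subset_right)
  refine OrdConnected.inter ⟨fun x hx y hy z hz => ?_⟩ (Ipq_ordConn q)
  rcases hm with h | h
  · exact (Ipq_ordConn p).out hx hy ⟨h hz.1, h hz.2⟩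
  · exact (Ipq_ordConn p).out hy hx ⟨h hz.2, h hz.1⟩

lemma Llom_sUnion : ⋃₀ Llom = (Set.univ : Set ℝ) := by
  refine subset_antisymm (subset_univ _) fun x _ => ?_
  exact ⟨Ioo (x - 1) (x + 1), Ioo_mem_Llom _ _, by constructor <;> linarith⟩

lemma Llom_woF : woF Llom = {U : Set ℝ | IsOpen U} := by
  ext U
  constructor
  · rintro ⟨F', hF', rfl⟩
    exact isOpen_sUnion fun t ht => Llom_isOpen (hF' ht)
  · intro hU
    replace hU : IsOpen U := hU
    refine ⟨{V | V ∈ Llom ∧ V ⊆ U}, fun V hV => hV.1, ?_⟩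
    refine subset_antisymm (fun x hx => ?_) (fun x hx => ?_)
    · obtain ⟨l, u, hxm, hsub⟩ := mem_nhds_iff_exists_Ioo_subset.1 (hU.mem_nhds hx)
      exact ⟨Ioo l u, ⟨Ioo_mem_Llom _ _, hsub⟩, hxm⟩
    · obtain ⟨V, ⟨_, hVU⟩, hxV⟩ := hx
      exact hVU hxV

lemma arctan_bdd : IsBdd Llom Llom Real.arctan := by
  intro W _
  refine ⟨Ioo (-2) 2, Ioo_mem_Llom _ _, fun x _ => ?_⟩
  have h1 := Real.arctan_lt_pi_div_two x
  have h2 := Real.neg_pi_div_two_lt_arctan x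
  have := Real.pi_lt_d2
  constructor <;> nlinarith

lemma sin_bdd : IsBdd Llom Llom Real.sin := by
  intro W _
  refine ⟨Ioo (-2) 2, Ioo_mem_Llom _ _, fun x _ => ?_⟩
  have h1 := Real.sin_le_one x
  have h2 := Real.neg_one_le_sin x
  simp only [mem_preimage, mem_Ioo]
  constructor <;> nlinarith

lemma neg_not_bdd : ¬ IsBdd Llom Llom (fun x : ℝ => -x) := by
  intro h
  obtain ⟨V, hV, hsub⟩ := h (Iio 0) (Iio_mem_Llom 0)
  obtain ⟨M, hM⟩ := Llom_bddAbove hV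
  have hx : (-(max M 0 + 1) : ℝ) ∈ Iio 0 := by
    simp only [mem_Iio]
    have := le_max_right M 0
    linarith
  have := hM (hsub hx)
  simp only [mem_preimage, neg_neg] at this
  have := le_max_left M 0
  linarith [this]

lemma exp_neg_not_bdd : ¬ IsBdd Llom Llom (fun x : ℝ => Real.exp (-x)) := by
  intro h
  obtain ⟨V, hV, hsub⟩ := h (Iio 0) (Iio_mem_Llom 0)
  obtain ⟨M, hM⟩ := Llom_bddAbove hV
  have hx : (-(max M 1) : ℝ) ∈ Iio 0 := by
    simp only [mem_Iio]
    have := le_max_right M 1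
    linarith
  have h1 := hM (hsub hx)
  simp only [mem_preimage, neg_neg] at h1
  have h2 := Real.add_one_le_exp (max M 1)
  have := le_max_left M 1
  linarith

lemma sin_not_ct : ¬ IsCt Llom Llom Real.sin := by
  intro h
  obtain ⟨F, hF⟩ := h (Ioo 0 2) (Ioo_mem_Llom 0 2) (Iio 0) (Iio_mem_Llom 0)
  set g : ℕ → ℝ := fun k => π / 2 - 2 * π * (k + 1) with hg_def
  have hpi := Real.pi_gt_three
  have hsin : ∀ k, Real.sin (g k) = 1 := by
    intro k
    have : g k = π / 2 + (-(k + 1) : ℤ) * (2 * π) := by simp [hg_def]; push_cast; ring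
    rw [this, Real.sin_add_int_mul_two_pi, Real.sin_pi_div_two]
  have hgneg : ∀ k, g k < 0 := by
    intro k
    have : (0 : ℝ) ≤ (k : ℝ) := Nat.cast_nonneg k
    simp only [hg_def]
    nlinarith
  have hmem : ∀ k, ∃ p ∈ F, p.1 < ((g k : ℝ) : EReal) ∧ g k < p.2 := by
    intro k
    have hgk : g k ∈ Real.sin ⁻¹' Ioo 0 2 ∩ Iio 0 := by
      refine ⟨?_, hgneg k⟩
      simp only [mem_preimage, mem_Ioo, hsin k]
      norm_num
    rw [hF] at hgk
    simp only [mem_iUnion, mem_setOf_eq, exists_prop] at hgk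
    obtain ⟨q, hq, h1, h2⟩ := hgk
    exact ⟨q, hq, h1, h2⟩
  choose p hpF hp1 hp2 using hmem
  obtain ⟨k, k', hne, heq⟩ :=
    Finite.exists_ne_map_eq_of_infinite (fun k => (⟨p k, hpF k⟩ : {q // q ∈ F}))
  have heq' : p k = p k' := congrArg Subtype.val heq
  have key : ∀ m m', m < m' → p m = p m' → False := by
    intro m m' hlt hpe
    set y : ℝ := g m - π with hy_def
    have hgm' : g m' ≤ g m - 2 * π := by
      have : (m : ℝ) + 1 ≤ (m' : ℝ) := by exact_mod_cast hlt
      simp only [hg_def]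
      nlinarith
    have hylt : y < g m := by simp only [hy_def]; linarith
    have hgy : g m' < y := by simp only [hy_def]; linarith
    have hyin : y ∈ ⋃ q ∈ F, {x : ℝ | q.1 < (x : EReal) ∧ x < q.2} := by
      refine mem_biUnion (hpF m) ⟨?_, lt_trans hylt (hp2 m)⟩
      calc (p m).1 < ((g m' : ℝ) : EReal) := hpe ▸ hp1 m'
        _ < ((y : ℝ) : EReal) := EReal.coe_lt_coe_iff.2 hgy
    rw [← hF] at hyin
    have hsy : Real.sin y = -1 := by
      have : y = -(π / 2) + (-(m + 1) : ℤ) * (2 * π) := by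
        simp [hy_def, hg_def]; push_cast; ring
      rw [this, Real.sin_add_int_mul_two_pi, Real.sin_neg, Real.sin_pi_div_two]
    have := hyin.1
    simp only [mem_preimage, mem_Ioo, hsy] at this
    linarith [this.1]
  rcases hne.lt_or_gt with hlt | hlt
  · exact key _ _ hlt heq'
  · exact key _ _ hlt heq'.symm

end Helpers

/-- `(ℝ, L_{l⁺om})` is a locally small space whose weakly open sets form the
natural topology of `ℝ`; `arctan` is bounded continuous, `x ↦ -x` is
continuous but not bounded, `sin` is bounded but not continuous, and
`x ↦ exp(-x)` is continuous but not bounded. -/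
theorem Llom_examples :
    ∅ ∈ Llom ∧
    (∀ A ∈ Llom, ∀ B ∈ Llom, A ∩ B ∈ Llom) ∧
    (∀ A ∈ Llom, ∀ B ∈ Llom, A ∪ B ∈ Llom) ∧
    ⋃₀ Llom = (Set.univ : Set ℝ) ∧
    woF Llom = {U : Set ℝ | IsOpen U} ∧
    IsBdd Llom Llom Real.arctan ∧ IsCt Llom Llom Real.arctan ∧
    IsCt Llom Llom (fun x : ℝ => -x) ∧ ¬ IsBdd Llom Llom (fun x : ℝ => -x) ∧
    IsBdd Llom Llom Real.sin ∧ ¬ IsCt Llom Llom Real.sin ∧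
    IsCt Llom Llom (fun x : ℝ => Real.exp (-x)) ∧
    ¬ IsBdd Llom Llom (fun x : ℝ => Real.exp (-x)) := by
  refine ⟨Llom_empty, fun A hA B hB => Llom_inter hA hB, fun A hA B hB => Llom_union hA hB,
    Llom_sUnion, Llom_woF, arctan_bdd,
    isCt_of_mono Real.continuous_arctan (Or.inl Real.arctan_strictMono.monotone),
    isCt_of_mono continuous_neg (Or.inr fun a b hab => neg_le_neg hab),
    neg_not_bdd, sin_bdd, sin_not_ct,
    isCt_of_mono (Real.continuous_exp.comp continuous_neg)
      (Or.inr fun a b hab => Real.exp_le_exp.2 (neg_le_neg hab)),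
    exp_neg_not_bdd⟩
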